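/- Let H : ℝ^n × ℝ^n → ℝ be twice continuously differentiable and let (x(t), y(t)) follow a Hamiltonian curve for H on [0, T]. Let M(t) be the 2n × 2n block matrix [[H_{yx}, H_{yy}], [−H_{xx}, −H_{xy}]] whose blocks are the second partial derivative matrices of H evaluated at (x(t), y(t)) (so (H_{yx})_{ij} = ∂²H/∂y_i∂x_j, (H_{yy})_{ij} = ∂²H/∂y_i∂y_j, (H_{xx})_{ij} = ∂²H/∂x_i∂x_j, (H_{xy})_{ij} = ∂²H/∂x_i∂y_j). If Φ : [0, T] → ℝ^{2n×2n} is differentiable with Φ'(t) = M(t)Φ(t) for all t ∈ [0, T] and Φ(0) = I, then det Φ(t) = 1 for all t ∈ [0, T]. (In particular, the Jacobian of the time-t Hamiltonian flow map has determinant 1, so the flow preserves Lebesgue measure.) -/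

import Mathlib

open Set Matrix

/-- The second partial derivative of `H` at `p`, first in direction `v`, then in
direction `u`: `D_u D_v H (p)`. -/
noncomputable def secondPartial (n : ℕ)
    (H : EuclideanSpace ℝ (Fin n) × EuclideanSpace ℝ (Fin n) → ℝ)
    (p u v : EuclideanSpace ℝ (Fin n) × EuclideanSpace ℝ (Fin n)) : ℝ :=
  fderiv ℝ (fun q => fderiv ℝ H q v) p u


lemma det_hasDerivAt {ι : Type*} [Fintype ι] [DecidableEq ι]
    {Φ : ℝ → Matrix ι ι ℝ} {A : Matrix ι ι ℝ} {t : ℝ}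
    (h : ∀ i j, HasDerivAt (fun s => Φ s i j) (A i j) t) :
    HasDerivAt (fun s => (Φ s).det)
      (∑ i, ((Φ t).updateRow i (A i)).det) t := by
  have hrew : ∀ s, (Φ s).det = ∑ σ : Equiv.Perm ι,
      (Equiv.Perm.sign σ : ℤ) * ∏ i, Φ s i (σ i) := by
    intro s
    rw [← Matrix.det_transpose, Matrix.det_apply']
    simp [Matrix.transpose_apply]
  have key : HasDerivAt (fun s => ∑ σ : Equiv.Perm ι,
      (Equiv.Perm.sign σ : ℤ) * ∏ i, Φ s i (σ i))
      (∑ σ : Equiv.Perm ι, (Equiv.Perm.sign σ : ℤ) *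
        ∑ i, (∏ j ∈ Finset.univ.erase i, Φ t j (σ j)) • A i (σ i)) t := by
    apply HasDerivAt.fun_sum
    intro σ _
    exact (HasDerivAt.fun_finsetProd (fun i _ => h i (σ i))).const_mul _
  have heq : (fun s => (Φ s).det) = (fun s => ∑ σ : Equiv.Perm ι,
      (Equiv.Perm.sign σ : ℤ) * ∏ i, Φ s i (σ i)) := funext hrew
  rw [heq]
  convert key using 1
  have hL : ∀ i, ((Φ t).updateRow i (A i)).det = ∑ σ : Equiv.Perm ι,
      (Equiv.Perm.sign σ : ℤ) *
        (A i (σ i) * ∏ j ∈ Finset.univ.erase i, Φ t j (σ j)) := by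
    intro i
    rw [← Matrix.det_transpose, Matrix.det_apply']
    congr 1
    ext σ
    congr 1
    rw [← Finset.mul_prod_erase Finset.univ _ (Finset.mem_univ i)]
    congr 1
    · simp [Matrix.transpose_apply, Matrix.updateRow_apply]
    · apply Finset.prod_congr rfl
      intro j hj
      simp [Matrix.transpose_apply, Matrix.updateRow_apply,
        Finset.ne_of_mem_erase hj]
  simp_rw [hL]
  rw [Finset.sum_comm]
  congr 1
  ext σ
  rw [Finset.mul_sum]
  congr 1
  ext i
  simp only [smul_eq_mul]
  ring

lemma sum_det_updateRow_mul {ι : Type*} [Fintype ι] [DecidableEq ι]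
    (N P : Matrix ι ι ℝ) :
    ∑ i, (P.updateRow i ((N * P) i)).det = N.trace * P.det := by
  have hrow : ∀ i, (N * P) i = ∑ k, N i k • P k := by
    intro i; ext j; simp [Matrix.mul_apply]
  have h : ∀ i, (P.updateRow i ((N * P) i)).det = N i i * P.det := by
    intro i
    rw [hrow i, Matrix.det_updateRow_sum P i (fun k => N i k)]
    simp
  simp_rw [h, Matrix.trace, Matrix.diag]
  rw [Finset.sum_mul]

lemma secondPartial_eq (n : ℕ)
    (H : EuclideanSpace ℝ (Fin n) × EuclideanSpace ℝ (Fin n) → ℝ)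
    (hH : ContDiff ℝ 2 H)
    (p u v : EuclideanSpace ℝ (Fin n) × EuclideanSpace ℝ (Fin n)) :
    secondPartial n H p u v = fderiv ℝ (fderiv ℝ H) p u v := by
  have hd : DifferentiableAt ℝ (fderiv ℝ H) p :=
    ((hH.fderiv_right (m := 1) le_rfl).differentiable one_ne_zero) p
  have h1 : HasFDerivAt (fun q => fderiv ℝ H q v)
      ((fderiv ℝ (fderiv ℝ H) p).flip v) p := by
    have := hd.hasFDerivAt.clm_apply (hasFDerivAt_const v p)
    simpa using this
  rw [secondPartial, h1.fderiv]
  rfl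

lemma secondPartial_symm (n : ℕ)
    (H : EuclideanSpace ℝ (Fin n) × EuclideanSpace ℝ (Fin n) → ℝ)
    (hH : ContDiff ℝ 2 H)
    (p u v : EuclideanSpace ℝ (Fin n) × EuclideanSpace ℝ (Fin n)) :
    secondPartial n H p u v = secondPartial n H p v u := by
  rw [secondPartial_eq n H hH, secondPartial_eq n H hH]
  exact (hH.contDiffAt.isSymmSndFDerivAt (by norm_num)).eq u v

/-- The linearization (variational equation) of a Hamiltonian flow has
Jacobian with determinant one: if `Φ' = M Φ`, `Φ 0 = I`, with `M` the block matrix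
`[[H_yx, H_yy], [-H_xx, -H_xy]]` along a Hamiltonian curve, then `det (Φ t) = 1`. -/
theorem hamiltonian_flow_jacobian_det_one
    (n : ℕ) (T : ℝ) (hT : 0 ≤ T)
    (H : EuclideanSpace ℝ (Fin n) × EuclideanSpace ℝ (Fin n) → ℝ)
    (hH : ContDiff ℝ 2 H)
    (x y : ℝ → EuclideanSpace ℝ (Fin n))
    (hx : ∀ t ∈ Icc 0 T, HasDerivAt x (gradient (fun v => H (x t, v)) (y t)) t)
    (hy : ∀ t ∈ Icc 0 T, HasDerivAt y (-(gradient (fun u => H (u, y t)) (x t))) t)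
    (M : ℝ → Matrix (Fin n ⊕ Fin n) (Fin n ⊕ Fin n) ℝ)
    (hM : ∀ t, M t = Matrix.fromBlocks
      (Matrix.of fun i j => secondPartial n H (x t, y t)
        (0, EuclideanSpace.single i 1) (EuclideanSpace.single j 1, 0))
      (Matrix.of fun i j => secondPartial n H (x t, y t)
        (0, EuclideanSpace.single i 1) (0, EuclideanSpace.single j 1))
      (Matrix.of fun i j => -secondPartial n H (x t, y t)
        (EuclideanSpace.single i 1, 0) (EuclideanSpace.single j 1, 0))
      (Matrix.of fun i j => -secondPartial n H (x t, y t)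
        (EuclideanSpace.single i 1, 0) (0, EuclideanSpace.single j 1)))
    (Φ : ℝ → Matrix (Fin n ⊕ Fin n) (Fin n ⊕ Fin n) ℝ)
    (hΦ : ∀ t ∈ Icc 0 T, ∀ i j, HasDerivAt (fun s => Φ s i j) ((M t * Φ t) i j) t)
    (hΦ0 : Φ 0 = 1) :
    ∀ t ∈ Icc 0 T, (Φ t).det = 1 := by
  intro t ht
  have hdet : ∀ s ∈ Icc 0 T, HasDerivAt (fun r => (Φ r).det) 0 s := by
    intro s hs
    have h1 := det_hasDerivAt (fun i j => hΦ s hs i j)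
    have h2 : ∑ i, ((Φ s).updateRow i ((M s * Φ s) i)).det
        = (M s).trace * (Φ s).det := sum_det_updateRow_mul _ _
    have htr : (M s).trace = 0 := by
      rw [hM s]
      have hsymm : ∀ i : Fin n, secondPartial n H (x s, y s)
          (0, EuclideanSpace.single i 1) (EuclideanSpace.single i 1, 0)
          = secondPartial n H (x s, y s)
          (EuclideanSpace.single i 1, 0) (0, EuclideanSpace.single i 1) :=
        fun i => secondPartial_symm n H hH _ _ _
      simp [Matrix.trace, Matrix.diag, Fintype.sum_sum_type,
        Matrix.fromBlocks, hsymm]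
    rw [h2, htr, zero_mul] at h1
    exact h1
  have hcont : ContinuousOn (fun r => (Φ r).det) (Icc 0 T) :=
    fun s hs => (hdet s hs).continuousAt.continuousWithinAt
  have hconst := constant_of_has_deriv_right_zero hcont
    (fun s hs => (hdet s (Ico_subset_Icc_self hs)).hasDerivWithinAt) t ht
  simpa [hΦ0] using hconst
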